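/- In the setting of the localized conductances C^R and measure ν^R (as defined via a symmetric C with ν(x) = Σ_y C(x,y)|x-y|² ∈ (0,∞)), for all κ ∈ (0,1], R ≥ 1 and all x ∈ B(0,4R): (1/ν^R(x)) Σ_{y: |y-x| > κR} C^R(x,y) ≤ (1+2d)/(κ² R²). -/

import Mathlib

open scoped Classical

/-- Euclidean norm of a point of `ℤ^d`. -/
noncomputable def enorm {d : ℕ} (x : Fin d → ℤ) : ℝ :=
  Real.sqrt (∑ i, ((x i : ℝ)) ^ 2)

/-- Membership in the box `[-L,L]^d ∩ ℤ^d`. -/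
def inBox {d : ℕ} (L : ℕ) (x : Fin d → ℤ) : Prop := ∀ i, |x i| ≤ (L : ℤ)

/-- Localized conductances `C^R`. -/
noncomputable def CR {d : ℕ} (C : (Fin d → ℤ) → (Fin d → ℤ) → ℝ) (R : ℕ)
    (x y : Fin d → ℤ) : ℝ :=
  if inBox (2 * R) x ∨ inBox (2 * R) y then C x y
  else if _root_.enorm (x - y) = 1 then 1 else 0

/-- Localized measure `ν^R`. -/
noncomputable def nuR {d : ℕ} (C : (Fin d → ℤ) → (Fin d → ℤ) → ℝ) (R : ℕ)
    (x : Fin d → ℤ) : ℝ :=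
  if inBox (2 * R) x then ∑' y, C x y * _root_.enorm (x - y) ^ 2
  else if inBox (4 * R) x then 1 + ∑' y, C x y * _root_.enorm (x - y) ^ 2
  else 1

lemma enorm_symm {d : ℕ} (x y : Fin d → ℤ) : _root_.enorm (y - x) = _root_.enorm (x - y) := by
  unfold _root_.enorm
  congr 1
  apply Finset.sum_congr rfl
  intro i _
  simp only [Pi.sub_apply]
  push_cast
  ring

lemma enorm_nonneg' {d : ℕ} (v : Fin d → ℤ) : 0 ≤ _root_.enorm v := Real.sqrt_nonneg _

lemma unit_vec {d : ℕ} (x y : Fin d → ℤ) (h : _root_.enorm (x - y) = 1) :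
    ∃ i, y = Function.update x i (x i + 1) ∨ y = Function.update x i (x i - 1) := by
  have hS : (∑ i, (x i - y i) ^ 2 : ℤ) = 1 := by
    have h0 : (0:ℝ) ≤ ∑ i, (((x - y) i : ℝ)) ^ 2 :=
      Finset.sum_nonneg fun i _ => sq_nonneg _
    have h1 : (∑ i, (((x - y) i : ℝ)) ^ 2) = 1 := by
      have := h
      unfold _root_.enorm at this
      rwa [Real.sqrt_eq_one] at this
    have : ((∑ i, (x i - y i) ^ 2 : ℤ) : ℝ) = 1 := by
      push_cast
      simpa [Pi.sub_apply] using h1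
    exact_mod_cast this
  set v : Fin d → ℤ := fun i => x i - y i with hv
  have hS' : ∑ i, v i ^ 2 = 1 := hS
  have hex : ∃ i, v i ≠ 0 := by
    by_contra hc
    push_neg at hc
    have : (∑ i, v i ^ 2 : ℤ) = 0 := Finset.sum_eq_zero fun i _ => by rw [hc i]; ring
    omega
  obtain ⟨i, hi⟩ := hex
  have h2 : v i ^ 2 ≤ 1 := by
    calc v i ^ 2 ≤ ∑ j, v j ^ 2 :=
      Finset.single_le_sum (f := fun j => v j ^ 2) (fun j _ => sq_nonneg _) (Finset.mem_univ i)
    _ = 1 := hS'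
  have h1 : 1 ≤ v i ^ 2 := by
    rcases hi.lt_or_gt with h | h <;> nlinarith
  have hsq : v i ^ 2 = 1 := le_antisymm h2 h1
  have hrest : ∀ j, j ≠ i → v j = 0 := by
    intro j hj
    have hsplit := Finset.add_sum_erase Finset.univ (fun k => v k ^ 2) (Finset.mem_univ i)
    have hz : ∑ k ∈ Finset.univ.erase i, v k ^ 2 = 0 := by omega
    have := (Finset.sum_eq_zero_iff_of_nonneg (fun k _ => sq_nonneg (v k))).mp hz j
      (Finset.mem_erase.mpr ⟨hj, Finset.mem_univ j⟩)
    exact pow_eq_zero_iff (n := 2) (by norm_num) |>.mp this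
  have hvi : v i = 1 ∨ v i = -1 := by
    have : (v i - 1) * (v i + 1) = 0 := by nlinarith
    rcases mul_eq_zero.mp this with h | h
    · left; omega
    · right; omega
  refine ⟨i, ?_⟩
  rcases hvi with h | h
  · right
    funext j
    rcases eq_or_ne j i with rfl | hj
    · simp [Function.update_self]
      have : x j - y j = 1 := h
      omega
    · simp [Function.update_of_ne hj]
      have : x j - y j = 0 := hrest j hj
      omega
  · left
    funext j
    rcases eq_or_ne j i with rfl | hj
    · simp [Function.update_self]
      have : x j - y j = -1 := h
      omega
    · simp [Function.update_of_ne hj]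
      have : x j - y j = 0 := hrest j hj
      omega

theorem stmt_6 (d : ℕ) (hd : 1 ≤ d) (C : (Fin d → ℤ) → (Fin d → ℤ) → ℝ)
    (hnonneg : ∀ x y, 0 ≤ C x y) (hsymm : ∀ x y, C x y = C y x)
    (hsum : ∀ x, Summable (fun y => C x y * _root_.enorm (x - y) ^ 2))
    (hνpos : ∀ x, 0 < ∑' y, C x y * _root_.enorm (x - y) ^ 2)
    (R : ℕ) (hR : 1 ≤ R) (κ : ℝ) (hκ1 : 0 < κ) (hκ2 : κ ≤ 1)
    (x : Fin d → ℤ) (hx : inBox (4 * R) x) :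
    (∑' y, if κ * R < _root_.enorm (y - x) then CR C R x y else 0) / nuR C R x ≤
      (1 + 2 * d) / (κ ^ 2 * R ^ 2) := by
  have hRpos : (0:ℝ) < (R:ℝ) := by exact_mod_cast Nat.lt_of_lt_of_le Nat.zero_lt_one hR
  set K := κ ^ 2 * (R:ℝ) ^ 2 with hKdef
  have hK : 0 < K := by positivity
  set ν := ∑' y, C x y * _root_.enorm (x - y) ^ 2 with hνdef
  have hν0 : 0 < ν := hνpos x
  set f := fun y => if κ * (R:ℝ) < _root_.enorm (y - x) then CR C R x y else 0 with hfdef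
  set g := fun y => C x y * _root_.enorm (x - y) ^ 2 / K with hgdef
  have hgnn : ∀ y, 0 ≤ g y := by
    intro y
    have := hnonneg x y
    have := enorm_nonneg' (x - y)
    positivity
  have hgS : Summable g := (hsum x).div_const K
  have hgsum : ∑' y, g y = ν / K := by
    rw [hgdef, tsum_div_const]
  have hCb : ∀ y, κ * (R:ℝ) < _root_.enorm (y - x) → C x y ≤ g y := by
    intro y hy
    rw [hgdef]
    rw [le_div_iff₀ hK]
    have h1 : K ≤ _root_.enorm (x - y) ^ 2 := by
      have h2 : (κ * R) ^ 2 ≤ _root_.enorm (x - y) ^ 2 := by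
        rw [← enorm_symm x y]
        apply pow_le_pow_left₀ (by positivity) hy.le
      calc K = (κ * R) ^ 2 := by ring
      _ ≤ _ := h2
    calc C x y * K ≤ C x y * _root_.enorm (x - y) ^ 2 :=
      mul_le_mul_of_nonneg_left h1 (hnonneg x y)
    _ = _ := by ring
  have hfnn : ∀ y, 0 ≤ f y := by
    intro y
    rw [hfdef]
    simp only
    split
    · rw [CR]
      split
      · exact hnonneg x y
      · split <;> norm_num
    · exact le_rfl
  by_cases hx2 : inBox (2 * R) x
  · -- x in the inner box
    have hnu : nuR C R x = ν := by rw [nuR, if_pos hx2]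
    have hfle : ∀ y, f y ≤ g y := by
      intro y
      rw [hfdef]
      simp only
      split
      · rename_i hcut
        rw [CR, if_pos (Or.inl hx2)]
        exact hCb y hcut
      · exact hgnn y
    have hfS : Summable f := Summable.of_nonneg_of_le hfnn hfle hgS
    have h1 : ∑' y, f y ≤ ν / K := by
      rw [← hgsum]
      exact Summable.tsum_le_tsum hfle hfS hgS
    rw [hnu, div_le_iff₀ hν0]
    calc ∑' y, f y ≤ ν / K := h1
    _ ≤ (1 + 2 * (d:ℝ)) / K * ν := by
      have hdnn : (0:ℝ) ≤ d := Nat.cast_nonneg d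
      have h2 : ν ≤ (1 + 2 * (d:ℝ)) * ν := by nlinarith [hν0.le]
      calc ν / K = ν * (1 / K) := by ring
      _ ≤ ((1 + 2 * (d:ℝ)) * ν) * (1 / K) :=
        mul_le_mul_of_nonneg_right h2 (by positivity)
      _ = (1 + 2 * (d:ℝ)) / K * ν := by ring
  · -- x in the annulus
    have hnu : nuR C R x = 1 + ν := by rw [nuR, if_neg hx2, if_pos hx]
    have hnupos : (0:ℝ) < 1 + ν := by linarith
    set A : Fin d → (Fin d → ℤ) → ℝ := fun i y =>
      (if y = Function.update x i (x i + 1) then 1 / K else 0) +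
      (if y = Function.update x i (x i - 1) then 1 / K else 0) with hAdef
    have hAS : ∀ i, Summable (A i) := fun i =>
      ((hasSum_ite_eq _ _).summable.add (hasSum_ite_eq _ _).summable)
    have hAnn : ∀ i y, 0 ≤ A i y := by
      intro i y
      simp only [hAdef]
      have h1K : (0:ℝ) ≤ 1 / K := by positivity
      split <;> split <;> simp_all <;> positivity
    set hb : (Fin d → ℤ) → ℝ := fun y => ∑ i, A i y with hbdef
    have hbS : Summable hb := by
      apply summable_sum
      intro i _
      exact hAS i
    have hbnn : ∀ y, 0 ≤ hb y := fun y => Finset.sum_nonneg fun i _ => hAnn i y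
    have hbsum : ∑' y, hb y = (d:ℝ) * (2 / K) := by
      rw [hbdef]
      rw [Summable.tsum_finsetSum (fun i _ => hAS i)]
      have hone : ∀ i, ∑' y, A i y = 2 / K := by
        intro i
        simp only [hAdef]
        rw [Summable.tsum_add (hasSum_ite_eq _ _).summable (hasSum_ite_eq _ _).summable,
          tsum_ite_eq, tsum_ite_eq]
        ring
      rw [Finset.sum_congr rfl (fun i _ => hone i)]
      simp [Finset.card_univ]
    have hfle : ∀ y, f y ≤ g y + hb y := by
      intro y
      rw [hfdef]
      simp only
      split
      · rename_i hcut
        rw [CR]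
        by_cases hor : inBox (2 * R) x ∨ inBox (2 * R) y
        · rw [if_pos hor]
          have := hCb y hcut
          linarith [hbnn y]
        · rw [if_neg hor]
          by_cases h1 : _root_.enorm (x - y) = 1
          · rw [if_pos h1]
            have hK1 : K < 1 := by
              have hcut' : κ * R < 1 := by
                rw [enorm_symm x y] at hcut
                rw [h1] at hcut
                exact hcut
              have : (κ * R) ^ 2 < 1 ^ 2 := by
                apply pow_lt_pow_left₀ hcut' (by positivity)
                norm_num
              calc K = (κ * R) ^ 2 := by ring
              _ < 1 := by linarith
            have h1K : (1:ℝ) ≤ 1 / K := by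
              rw [le_div_iff₀ hK]; linarith
            obtain ⟨i, hi⟩ := unit_vec x y h1
            have hAi : 1 / K ≤ A i y := by
              simp only [hAdef]
              have h1K' : (0:ℝ) ≤ 1 / K := by positivity
              rcases hi with hi | hi
              · rw [if_pos hi]
                split <;> simp_all <;> linarith
              · rw [if_pos hi]
                split <;> simp_all <;> linarith
            have hAb : A i y ≤ hb y :=
              Finset.single_le_sum (f := fun i => A i y) (fun j _ => hAnn j y)
                (Finset.mem_univ i)
            calc (1:ℝ) ≤ 1 / K := h1K
            _ ≤ A i y := hAi
            _ ≤ hb y := hAb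
            _ ≤ g y + hb y := le_add_of_nonneg_left (hgnn y)
          · rw [if_neg h1]
            have := hgnn y
            have := hbnn y
            linarith
      · have := hgnn y
        have := hbnn y
        linarith
    have hghS : Summable (fun y => g y + hb y) := hgS.add hbS
    have hfS : Summable f := Summable.of_nonneg_of_le hfnn hfle hghS
    have h1 : ∑' y, f y ≤ ν / K + (d:ℝ) * (2 / K) := by
      calc ∑' y, f y ≤ ∑' y, (g y + hb y) := Summable.tsum_le_tsum hfle hfS hghS
      _ = ν / K + (d:ℝ) * (2 / K) := by rw [Summable.tsum_add hgS hbS, hgsum, hbsum]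
    rw [hnu, div_le_iff₀ hnupos]
    have hdnn : (0:ℝ) ≤ d := Nat.cast_nonneg d
    calc ∑' y, f y ≤ ν / K + (d:ℝ) * (2 / K) := h1
    _ ≤ (1 + 2 * (d:ℝ)) / K * (1 + ν) := by
      have h2 : ν + (d:ℝ) * 2 ≤ (1 + 2 * (d:ℝ)) * (1 + ν) := by
        nlinarith [hν0.le, mul_nonneg hdnn hν0.le]
      calc ν / K + (d:ℝ) * (2 / K) = (ν + (d:ℝ) * 2) * (1 / K) := by ring
      _ ≤ ((1 + 2 * (d:ℝ)) * (1 + ν)) * (1 / K) :=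
        mul_le_mul_of_nonneg_right h2 (by positivity)
      _ = (1 + 2 * (d:ℝ)) / K * (1 + ν) := by ring
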